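/- Let ρ_{A₁B₁} = (1/μ_max) Σ_{μ,μ'} [(1/ν_max) Σ_ν |e_{μ'ν}⟩⟨e_{μν}|]_{A₁} ⊗ [(1/τ_max) Σ_τ |f_{μ'τ}⟩⟨f_{μτ}|]_{B₁}, where {|e_{μν}⟩} and {|f_{μτ}⟩} are orthonormal families doubly indexed by μ ∈ {1,…,μ_max}, ν ∈ {1,…,ν_max} (resp. τ ∈ {1,…,τ_max}). Then Tr|ρ_{A₁B₁}^{T_{A₁}}| = μ_max, i.e. the logarithmic negativity of ρ_{A₁B₁} is log₂ μ_max. -/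

import Mathlib

open scoped BigOperators Kronecker ComplexOrder
noncomputable section
open Matrix

/-- trace norm `Tr |X|` where `|X| = √(Xᴴ X)`. -/
noncomputable def traceNorm {n : Type*} [Fintype n] [DecidableEq n] (X : Matrix n n ℂ) : ℝ :=
  (((Matrix.posSemidef_conjTranspose_mul_self X).1.eigenvectorUnitary.1 *
      diagonal (((↑) : ℝ → ℂ) ∘ Real.sqrt ∘ (Matrix.posSemidef_conjTranspose_mul_self X).1.eigenvalues) *
      (star (Matrix.posSemidef_conjTranspose_mul_self X).1.eigenvectorUnitary : Matrix n n ℂ)).trace).re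

/-- outer product `|u⟩⟨v|`. -/
def outer {n : Type*} (u v : n → ℂ) : Matrix n n ℂ := fun i j => u i * star (v j)

/-- inner product `⟨u|v⟩`. -/
def dotc {n : Type*} [Fintype n] (u v : n → ℂ) : ℂ := ∑ i, star (u i) * v i

/-- an orthonormal family of vectors. -/
def Orthonormal' {ι n : Type*} [Fintype n] [DecidableEq ι] (φ : ι → n → ℂ) : Prop :=
  ∀ i j, dotc (φ i) (φ j) = if i = j then 1 else 0

/-- tensor product of vectors `|u⟩ ⊗ |v⟩`. -/
def kvec {a b : Type*} (u : a → ℂ) (v : b → ℂ) : a × b → ℂ := fun p => u p.1 * v p.2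

/-- rank-one projector `|ψ⟩⟨ψ|`. -/
def projv {n : Type*} (ψ : n → ℂ) : Matrix n n ℂ := fun i j => ψ i * star (ψ j)

/-- partial trace over the second (B) factor. -/
def ptraceB {a b : Type*} [Fintype b] (ρ : Matrix (a × b) (a × b) ℂ) : Matrix a a ℂ :=
  fun i k => ∑ j, ρ (i, j) (k, j)

/-- partial trace over the first (A) factor. -/
def ptraceA {a b : Type*} [Fintype a] (ρ : Matrix (a × b) (a × b) ℂ) : Matrix b b ℂ :=
  fun j l => ∑ i, ρ (i, j) (i, l)

/-- partial transpose over the first (A) factor, in the canonical product basis. -/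
def pt {a b : Type*} (ρ : Matrix (a × b) (a × b) ℂ) : Matrix (a × b) (a × b) ℂ :=
  fun p q => ρ (q.1, p.2) (p.1, q.2)

/-- logarithmic negativity `E_N(ρ) = log₂ Tr |ρ^{T_A}|`. -/
noncomputable def logNeg {a b : Type*} [Fintype a] [Fintype b] [DecidableEq a] [DecidableEq b]
    (ρ : Matrix (a × b) (a × b) ℂ) : ℝ := Real.logb 2 (traceNorm (pt ρ))

lemma outer_conjTranspose {n : Type*} (u v : n → ℂ) : (outer u v)ᴴ = outer v u := by
  ext i j; simp [outer, conjTranspose_apply, mul_comm]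

lemma outer_mul_outer {n : Type*} [Fintype n] (u v x y : n → ℂ) :
    outer u v * outer x y = dotc v x • outer u y := by
  ext i j
  simp only [outer, Matrix.mul_apply, Matrix.smul_apply, dotc, smul_eq_mul, Finset.sum_mul]
  exact Finset.sum_congr rfl fun k _ => by ring

lemma trace_outer {n : Type*} [Fintype n] (u : n → ℂ) :
    (outer u u).trace = dotc u u := by
  simp [Matrix.trace, outer, dotc, Matrix.diag, mul_comm]

lemma dotc_kvec {a b : Type*} [Fintype a] [Fintype b] (u v : a → ℂ) (x y : b → ℂ) :
    dotc (kvec u x) (kvec v y) = dotc u v * dotc x y := by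
  simp only [dotc, kvec, Fintype.sum_prod_type, Finset.sum_mul_sum]
  refine Finset.sum_congr rfl fun i _ => Finset.sum_congr rfl fun j _ => ?_
  simp only [star_mul']; ring

theorem stmt11 {a b : Type*} [Fintype a] [Fintype b] [DecidableEq a] [DecidableEq b]
    {μmax νmax τmax : ℕ} (hμ : 0 < μmax) (hν : 0 < νmax) (hτ : 0 < τmax)
    (e : Fin μmax × Fin νmax → a → ℂ) (f : Fin μmax × Fin τmax → b → ℂ)
    (he : Orthonormal' e) (hf : Orthonormal' f)
    -- the partial transpose of ρ_{A₁B₁} over A₁, taken in the basis {|e_{μν}⟩}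
    (R : Matrix (a × b) (a × b) ℂ)
    (hR : R = ((μmax : ℂ))⁻¹ • ∑ μ, ∑ μ',
        (((νmax : ℂ))⁻¹ • ∑ ν, outer (e (μ, ν)) (e (μ', ν))) ⊗ₖ
          (((τmax : ℂ))⁻¹ • ∑ t, outer (f (μ', t)) (f (μ, t)))) :
    traceNorm R = μmax ∧ Real.logb 2 (traceNorm R) = Real.logb 2 μmax := by
  classical
  set W : (Fin μmax × Fin μmax × Fin νmax × Fin τmax) → (a × b) → ℂ := fun x => kvec (e (x.1, x.2.2.1)) (f (x.2.1, x.2.2.2)) with hWdef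
  set sw : (Fin μmax × Fin μmax × Fin νmax × Fin τmax) → (Fin μmax × Fin μmax × Fin νmax × Fin τmax) := fun x => (x.2.1, x.1, x.2.2) with hswdef
  have hswinv : ∀ x : Fin μmax × Fin μmax × Fin νmax × Fin τmax, sw (sw x) = x := fun x => rfl
  set S : Matrix (a × b) (a × b) ℂ := ∑ x : (Fin μmax × Fin μmax × Fin νmax × Fin τmax), outer (W (sw x)) (W x) with hSdef
  set P : Matrix (a × b) (a × b) ℂ := ∑ x : (Fin μmax × Fin μmax × Fin νmax × Fin τmax), outer (W x) (W x) with hPdef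
  set r : ℝ := (((μmax : ℝ)) * νmax * τmax)⁻¹ with hrdef
  have hr0 : 0 < r := by positivity
  -- orthonormality of W
  have hW : ∀ x y : Fin μmax × Fin μmax × Fin νmax × Fin τmax, dotc (W x) (W y) = if x = y then 1 else 0 := by
    rintro ⟨x1, x2, x3, x4⟩ ⟨y1, y2, y3, y4⟩
    show dotc (kvec (e (x1, x3)) (f (x2, x4))) (kvec (e (y1, y3)) (f (y2, y4))) = _
    rw [dotc_kvec, he, hf]
    simp only [Prod.mk.injEq]
    split_ifs <;> simp_all [Prod.mk.injEq, Prod.ext_iff]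
  -- R = r • S
  have hRS : R = (r : ℂ) • S := by
    subst hR
    ext ⟨i, i'⟩ ⟨j, j'⟩
    simp only [hSdef, hWdef, hswdef, Matrix.smul_apply, Matrix.sum_apply,
      Matrix.kroneckerMap_apply, outer, kvec, smul_eq_mul, Finset.mul_sum, Finset.sum_mul,
      Fintype.sum_prod_type, star_mul', hrdef]
    push_cast
    conv_lhs => rw [Finset.sum_comm]
    refine Finset.sum_congr rfl fun μ _ => Finset.sum_congr rfl fun μ' _ => ?_
    conv_lhs => rw [Finset.sum_comm]
    refine Finset.sum_congr rfl fun ν _ => Finset.sum_congr rfl fun t _ => ?_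
    ring
  have hSH : Sᴴ = S := by
    rw [hSdef, Matrix.conjTranspose_sum]
    simp only [outer_conjTranspose]
    exact Fintype.sum_equiv ⟨sw, sw, hswinv, hswinv⟩ _ _ fun x => by
      show outer (W x) (W (sw x)) = outer (W (sw (sw x))) (W (sw x))
      rw [hswinv]
  have hS2 : S * S = P := by
    rw [hSdef, Finset.sum_mul]
    simp only [Finset.mul_sum, outer_mul_outer, hW]
    rw [Finset.sum_comm]
    simp only [ite_smul, one_smul, zero_smul]
    rw [hPdef]
    refine Finset.sum_congr rfl fun y _ => ?_
    rw [Finset.sum_ite_eq' Finset.univ (sw y) (fun x => outer (W (sw x)) (W y))]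
    simp [hswinv]
  have hP2 : P * P = P := by
    rw [hPdef, Finset.sum_mul]
    simp only [Finset.mul_sum, outer_mul_outer, hW]
    rw [Finset.sum_comm]
    simp only [ite_smul, one_smul, zero_smul]
    refine Finset.sum_congr rfl fun y _ => ?_
    rw [Finset.sum_ite_eq' Finset.univ y (fun x => outer (W x) (W y))]
    simp
  have hPH : Pᴴ = P := by
    rw [hPdef, Matrix.conjTranspose_sum]
    simp only [outer_conjTranspose]
  -- R† R = r² • P
  have hRHR : Rᴴ * R = ((r : ℂ) ^ 2) • P := by
    rw [hRS, Matrix.conjTranspose_smul, hSH]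
    rw [Matrix.smul_mul, Matrix.mul_smul, hS2]
    simp only [smul_smul]
    congr 1
    rw [Complex.star_def, Complex.conj_ofReal]
    ring
  -- candidate square root
  have hT : Matrix.PosSemidef ((r : ℂ) • P) := by
    have hN : (((Real.sqrt r : ℝ) : ℂ) • P)ᴴ * (((Real.sqrt r : ℝ) : ℂ) • P) = (r : ℂ) • P := by
      rw [Matrix.conjTranspose_smul, hPH, Matrix.smul_mul, Matrix.mul_smul, hP2, smul_smul]
      congr 1
      rw [Complex.star_def, Complex.conj_ofReal, ← Complex.ofReal_mul,
        Real.mul_self_sqrt hr0.le]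
    rw [← hN]
    exact Matrix.posSemidef_conjTranspose_mul_self _
  have hsqrt : ((Matrix.posSemidef_conjTranspose_mul_self R).1.eigenvectorUnitary.1 *
      diagonal (((↑) : ℝ → ℂ) ∘ Real.sqrt ∘ (Matrix.posSemidef_conjTranspose_mul_self R).1.eigenvalues) *
      (star (Matrix.posSemidef_conjTranspose_mul_self R).1.eigenvectorUnitary : Matrix (a × b) (a × b) ℂ)) = (r : ℂ) • P := by
    open scoped MatrixOrder in
    have hA := Matrix.posSemidef_conjTranspose_mul_self R
    open scoped MatrixOrder in
    have h1 : ((Matrix.posSemidef_conjTranspose_mul_self R).1.eigenvectorUnitary.1 *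
        diagonal (((↑) : ℝ → ℂ) ∘ Real.sqrt ∘ (Matrix.posSemidef_conjTranspose_mul_self R).1.eigenvalues) *
        (star (Matrix.posSemidef_conjTranspose_mul_self R).1.eigenvectorUnitary : Matrix (a × b) (a × b) ℂ)) = CFC.sqrt (Rᴴ * R) := by
      rw [CFC.sqrt_eq_real_sqrt _ hA.nonneg, cfcₙ_eq_cfc, hA.1.cfc_eq]
      rfl
    open scoped MatrixOrder in
    rw [h1]
    open scoped MatrixOrder in
    refine CFC.sqrt_unique ?_ (Matrix.nonneg_iff_posSemidef.mpr hT)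
    rw [hRHR, Matrix.smul_mul, Matrix.mul_smul, hP2, smul_smul, pow_two]
  -- trace
  have hcard : (Fintype.card (Fin μmax × Fin μmax × Fin νmax × Fin τmax) : ℝ) = μmax * μmax * νmax * τmax := by
    simp
    ring
  have htrP : P.trace = (Fintype.card (Fin μmax × Fin μmax × Fin νmax × Fin τmax) : ℂ) := by
    rw [hPdef, Matrix.trace_sum]
    simp only [trace_outer, hW]
    simp
  have htn : traceNorm R = μmax := by
    rw [traceNorm, hsqrt, Matrix.trace_smul, htrP, smul_eq_mul]
    have : ((r : ℂ) * (Fintype.card (Fin μmax × Fin μmax × Fin νmax × Fin τmax) : ℂ)) = ((r * Fintype.card (Fin μmax × Fin μmax × Fin νmax × Fin τmax) : ℝ) : ℂ) := by push_cast; ring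
    rw [this, Complex.ofReal_re, hcard, hrdef]
    have h1 : (μmax : ℝ) ≠ 0 := Nat.cast_ne_zero.mpr hμ.ne'
    have h2 : (νmax : ℝ) ≠ 0 := Nat.cast_ne_zero.mpr hν.ne'
    have h3 : (τmax : ℝ) ≠ 0 := Nat.cast_ne_zero.mpr hτ.ne'
    field_simp
  exact ⟨htn, by rw [htn]⟩
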